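/- The function σ(ρ₁,ρ₂) = (1/π)[Λ(πρ₁)+Λ(πρ₂)+Λ(π(1-ρ₁-ρ₂))] with Λ(θ)=∫₀^θ ln(2 sin t)dt is strictly negative on the interior of the triangle T and vanishes on the boundary ∂T. -/

import Mathlib

open Real

/-- The Lobachevsky-type function `Λ(θ) = ∫₀^θ ln(2 sin t) dt`. -/
noncomputable def Lob (θ : ℝ) : ℝ := ∫ t in (0 : ℝ)..θ, Real.log (2 * Real.sin t)

/-- The lozenge surface tension. -/
noncomputable def surfTen (ρ₁ ρ₂ : ℝ) : ℝ :=
  (1 / π) * (Lob (π * ρ₁) + Lob (π * ρ₂) + Lob (π * (1 - ρ₁ - ρ₂)))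

open MeasureTheory intervalIntegral Set

private lemma intInt_log01 : IntervalIntegrable Real.log volume 0 1 := by
  have h : IntegrableOn (fun x : ℝ => -Real.log x) (Set.Ioc (0:ℝ) 1) := by
    apply integrableOn_deriv_of_nonneg (g := fun x : ℝ => x - x * Real.log x)
    · exact (continuous_id.sub Real.continuous_mul_log).continuousOn
    · intro x hx
      have hx0 : x ≠ 0 := ne_of_gt hx.1
      have h2 : HasDerivAt (fun x : ℝ => x - x * Real.log x) (1 - (Real.log x + 1)) x :=
        (hasDerivAt_id x).sub (Real.hasDerivAt_mul_log hx0)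
      convert h2 using 1; ring
    · intro x hx
      simp only [neg_nonneg]
      exact Real.log_nonpos hx.1.le hx.2.le
  rw [intervalIntegrable_iff_integrableOn_Ioc_of_le (by norm_num)]
  have h2 := h.neg
  rw [show (-fun x : ℝ => -Real.log x) = Real.log from by funext x; simp] at h2
  exact h2

private lemma intInt_log0pi2 : IntervalIntegrable Real.log volume 0 (π / 2) := by
  refine intInt_log01.trans (intervalIntegrable_log ?_)
  refine notMem_uIcc_of_lt zero_lt_one (by positivity)

private lemma intInt_f_half :
    IntervalIntegrable (fun t => Real.log (2 * Real.sin t)) volume 0 (π / 2) := by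
  have hle : (0:ℝ) ≤ π / 2 := by positivity
  rw [intervalIntegrable_iff_integrableOn_Ioc_of_le hle]
  have hlog : IntegrableOn Real.log (Set.Ioc (0:ℝ) (π/2)) :=
    (intervalIntegrable_iff_integrableOn_Ioc_of_le hle).mp intInt_log0pi2
  have hbound : IntegrableOn (fun t : ℝ => |Real.log t| + Real.log 2)
      (Set.Ioc (0:ℝ) (π/2)) := by
    refine hlog.norm.add ?_
    exact integrableOn_const measure_Ioc_lt_top.ne (by simp)
  refine hbound.mono' ?_ ?_
  · exact (Real.measurable_log.comp
      (measurable_const.mul Real.measurable_sin)).aestronglyMeasurable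
  · rw [ae_restrict_iff' measurableSet_Ioc]
    filter_upwards with t ht
    obtain ⟨ht0, ht2⟩ := ht
    have hsinpos : 0 < Real.sin t :=
      Real.sin_pos_of_pos_of_lt_pi ht0 (lt_of_le_of_lt ht2 (by linarith [pi_pos]))
    have hup : Real.sin t < t := Real.sin_lt ht0
    have hlo : 2 / π * t ≤ Real.sin t := Real.mul_le_sin ht0.le ht2
    have hpi4 : π ≤ 4 := by linarith [pi_le_four]
    have hlo' : t ≤ 2 * Real.sin t := by
      have h1 : (1:ℝ)/2 * t ≤ 2 / π * t := by
        have : (1:ℝ)/2 ≤ 2 / π := by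
          rw [div_le_div_iff₀ (by norm_num) pi_pos]; linarith
        nlinarith
      linarith
    have h1 : Real.log t ≤ Real.log (2 * Real.sin t) :=
      Real.log_le_log ht0 hlo'
    have h2 : Real.log (2 * Real.sin t) ≤ Real.log t + Real.log 2 := by
      have : Real.log (2 * Real.sin t) ≤ Real.log (2 * t) :=
        Real.log_le_log (by positivity) (by linarith)
      rwa [Real.log_mul two_ne_zero (ne_of_gt ht0), add_comm] at this
    have h3 : Real.log t ≤ |Real.log t| := le_abs_self _
    have h4 : -|Real.log t| ≤ Real.log t := neg_abs_le _
    have hl2 : (0:ℝ) ≤ Real.log 2 := Real.log_nonneg (by norm_num)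
    rw [Real.norm_eq_abs, abs_le]
    constructor <;> linarith

private lemma intInt_f_full :
    IntervalIntegrable (fun t => Real.log (2 * Real.sin t)) volume 0 π := by
  have h2 : IntervalIntegrable (fun t => Real.log (2 * Real.sin t)) volume (π/2) π := by
    have h := (intInt_f_half.comp_sub_left π).symm
    have he : π - π/2 = π/2 := by ring
    rw [he, sub_zero] at h
    simpa only [Real.sin_pi_sub] using h
  exact intInt_f_half.trans h2

private lemma intInt_f {a b : ℝ} (ha : a ∈ Set.Icc 0 π) (hb : b ∈ Set.Icc 0 π) :
    IntervalIntegrable (fun t => Real.log (2 * Real.sin t)) volume a b := by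
  refine intInt_f_full.mono_set ?_
  rw [Set.uIcc_of_le pi_pos.le]
  exact Set.uIcc_subset_Icc ha hb

private lemma lob_reflect {θ : ℝ} (h0 : 0 ≤ θ) (hπ : θ ≤ π) :
    Lob (π - θ) + Lob θ = Lob π := by
  have h1 : (∫ t in (π - θ)..π, Real.log (2 * Real.sin t)) = Lob θ := by
    have h := integral_comp_sub_left (a := 0) (b := θ)
      (fun t => Real.log (2 * Real.sin t)) π
    rw [sub_zero] at h
    rw [← h]
    simp only [Real.sin_pi_sub]
    rfl
  have h2 := integral_add_adjacent_intervals
    (intInt_f (a := 0) (b := π - θ) ⟨le_rfl, pi_pos.le⟩ ⟨by linarith, by linarith⟩)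
    (intInt_f (a := π - θ) (b := π) ⟨by linarith, by linarith⟩ ⟨pi_pos.le, le_rfl⟩)
  rw [h1] at h2
  exact h2

private lemma lob_pi : Lob π = 0 := by
  have hle : (0:ℝ) ≤ π / 2 := by positivity
  have hhalf : Lob (π/2) + Lob (π/2) = Lob π := by
    have := lob_reflect (θ := π/2) hle (by linarith [pi_pos])
    have he : π - π/2 = π/2 := by ring
    rwa [he] at this
  -- cos integrability and value
  have hcosInt : IntervalIntegrable (fun x => Real.log (2 * Real.cos x)) volume 0 (π/2) := by
    have h := (intInt_f_half.comp_sub_left (π/2)).symm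
    have he : π/2 - π/2 = 0 := by ring
    rw [he, sub_zero] at h
    simpa only [Real.sin_pi_div_two_sub] using h
  have hcosVal : (∫ x in (0:ℝ)..(π/2), Real.log (2 * Real.cos x)) = Lob (π/2) := by
    have h := integral_comp_sub_left (a := 0) (b := π/2)
      (fun t => Real.log (2 * Real.sin t)) (π/2)
    have he : π/2 - π/2 = 0 := by ring
    rw [he, sub_zero] at h
    simp only [Real.sin_pi_div_two_sub] at h
    rw [h]
    rfl
  have hdouble : (∫ x in (0:ℝ)..(π/2), Real.log (2 * Real.sin (2 * x)))
      = 2⁻¹ * Lob π := by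
    have h := integral_comp_mul_left (a := 0) (b := π/2) (c := 2)
      (fun t => Real.log (2 * Real.sin t)) two_ne_zero
    rw [mul_zero] at h
    have he : (2:ℝ) * (π/2) = π := by ring
    rw [he] at h
    simpa [Lob] using h
  have hsplit : (∫ x in (0:ℝ)..(π/2), Real.log (2 * Real.sin (2 * x)))
      = Lob (π/2) + Lob (π/2) := by
    have hae : ∀ᵐ (x:ℝ) ∂volume, x ∈ Set.uIoc (0:ℝ) (π/2) →
        Real.log (2 * Real.sin (2 * x))
          = Real.log (2 * Real.sin x) + Real.log (2 * Real.cos x) := by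
      have hne : ∀ᵐ (x:ℝ) ∂volume, x ≠ π/2 := by
        rw [MeasureTheory.ae_iff]
        simpa using MeasureTheory.measure_singleton (μ := volume) (π/2)
      filter_upwards [hne] with x hx hmem
      rw [Set.uIoc_of_le hle] at hmem
      have hx1 : 0 < x := hmem.1
      have hx2 : x < π/2 := lt_of_le_of_ne hmem.2 hx
      have hs : 0 < Real.sin x :=
        Real.sin_pos_of_pos_of_lt_pi hx1 (by linarith [pi_pos])
      have hc : 0 < Real.cos x := Real.cos_pos_of_mem_Ioo ⟨by linarith [pi_pos], hx2⟩
      rw [Real.sin_two_mul]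
      have he : 2 * (2 * Real.sin x * Real.cos x) = (2 * Real.sin x) * (2 * Real.cos x) := by
        ring
      rw [he, Real.log_mul (by positivity) (by positivity)]
    rw [integral_congr_ae hae, integral_add intInt_f_half hcosInt, hcosVal]
    rfl
  rw [hsplit, hhalf] at hdouble
  linarith

private lemma lob_reflect' {θ : ℝ} (h0 : 0 ≤ θ) (hπ : θ ≤ π) :
    Lob (π - θ) + Lob θ = 0 := by
  rw [lob_reflect h0 hπ, lob_pi]

private lemma lob_superadd {a b : ℝ} (ha : 0 < a) (hb : 0 < b) (hab : 2 * a + b ≤ π) :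
    Lob a + Lob b < Lob (a + b) := by
  have hπ := pi_pos
  have hamem : a ∈ Set.Icc (0:ℝ) π := ⟨ha.le, by linarith⟩
  have hIa : IntervalIntegrable (fun t => Real.log (2 * Real.sin t)) volume 0 a :=
    intInt_f ⟨le_refl 0, hπ.le⟩ hamem
  have hIb : IntervalIntegrable (fun t => Real.log (2 * Real.sin t)) volume 0 b :=
    intInt_f ⟨le_refl 0, hπ.le⟩ ⟨hb.le, by linarith⟩
  have hIab : IntervalIntegrable (fun t => Real.log (2 * Real.sin t)) volume b (a + b) :=
    intInt_f ⟨hb.le, by linarith⟩ ⟨by linarith, by linarith⟩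
  have hsum : Lob b + (∫ t in b..(a+b), Real.log (2 * Real.sin t)) = Lob (a + b) :=
    integral_add_adjacent_intervals hIb hIab
  have hshift : (∫ t in b..(a+b), Real.log (2 * Real.sin t))
      = ∫ x in (0:ℝ)..a, Real.log (2 * Real.sin (x + b)) := by
    have h := integral_comp_add_right (a := 0) (b := a)
      (fun t => Real.log (2 * Real.sin t)) b
    rw [zero_add] at h
    exact h.symm
  have hIshift : IntervalIntegrable (fun x => Real.log (2 * Real.sin (x + b))) volume 0 a := by
    have h := hIab.comp_add_right b
    have h1 : b - b = 0 := by ring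
    have h2 : a + b - b = a := by ring
    rwa [h1, h2] at h
  have hpos : 0 < ∫ x in (0:ℝ)..a,
      (Real.log (2 * Real.sin (x + b)) - Real.log (2 * Real.sin x)) := by
    refine intervalIntegral_pos_of_pos_on (hIshift.sub hIa) ?_ ha
    intro x hx
    obtain ⟨hx0, hxa⟩ := hx
    have hsx : 0 < Real.sin x :=
      Real.sin_pos_of_pos_of_lt_pi hx0 (by linarith)
    have hlt : Real.sin x < Real.sin (x + b) := by
      rw [← sub_pos, Real.sin_sub_sin]
      have he1 : (x + b - x) / 2 = b / 2 := by ring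
      have he2 : (x + b + x) / 2 = x + b / 2 := by ring
      rw [he1, he2]
      have h1 : 0 < Real.sin (b / 2) :=
        Real.sin_pos_of_pos_of_lt_pi (by linarith) (by linarith)
      have h2 : 0 < Real.cos (x + b / 2) :=
        Real.cos_pos_of_mem_Ioo ⟨by linarith, by linarith⟩
      positivity
    have h2s : 2 * Real.sin x < 2 * Real.sin (x + b) := by linarith
    have := Real.log_lt_log (by positivity : (0:ℝ) < 2 * Real.sin x) h2s
    linarith
  rw [integral_sub hIshift hIa] at hpos
  have : (∫ x in (0:ℝ)..a, Real.log (2 * Real.sin x)) = Lob a := rfl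
  rw [this, ← hshift] at hpos
  linarith

private lemma lob_zero : Lob 0 = 0 := integral_same

/-- The surface tension is strictly negative in the interior of the triangle `T` and
vanishes on its boundary. -/
theorem surfTen_neg_interior_zero_boundary :
    (∀ ρ₁ ρ₂ : ℝ, 0 < ρ₁ → 0 < ρ₂ → ρ₁ + ρ₂ < 1 → surfTen ρ₁ ρ₂ < 0) ∧
    (∀ ρ₁ ρ₂ : ℝ, 0 ≤ ρ₁ → 0 ≤ ρ₂ → ρ₁ + ρ₂ ≤ 1 →
      (ρ₁ = 0 ∨ ρ₂ = 0 ∨ ρ₁ + ρ₂ = 1) → surfTen ρ₁ ρ₂ = 0) := by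
  have hπ := pi_pos
  constructor
  · intro ρ₁ ρ₂ h1 h2 h3
    set θ₁ := π * ρ₁ with hθ₁
    set θ₂ := π * ρ₂ with hθ₂
    set θ₃ := π * (1 - ρ₁ - ρ₂) with hθ₃
    have ht1 : 0 < θ₁ := by positivity
    have ht2 : 0 < θ₂ := by positivity
    have ht3 : 0 < θ₃ := by
      have : 0 < 1 - ρ₁ - ρ₂ := by linarith
      positivity
    have htsum : θ₁ + θ₂ + θ₃ = π := by rw [hθ₁, hθ₂, hθ₃]; ring
    have hkey : Lob θ₁ + Lob θ₂ + Lob θ₃ < 0 := by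
      rcases le_total θ₁ θ₃ with hc | hc
      · have h12 : Lob θ₁ + Lob θ₂ < Lob (θ₁ + θ₂) :=
          lob_superadd ht1 ht2 (by linarith)
        have hrefl : Lob (π - (θ₁ + θ₂)) + Lob (θ₁ + θ₂) = 0 :=
          lob_reflect' (by linarith) (by linarith)
        have he : π - (θ₁ + θ₂) = θ₃ := by linarith
        rw [he] at hrefl
        linarith
      · have h32 : Lob θ₃ + Lob θ₂ < Lob (θ₃ + θ₂) :=
          lob_superadd ht3 ht2 (by linarith)
        have hrefl : Lob (π - (θ₃ + θ₂)) + Lob (θ₃ + θ₂) = 0 :=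
          lob_reflect' (by linarith) (by linarith)
        have he : π - (θ₃ + θ₂) = θ₁ := by linarith
        rw [he] at hrefl
        linarith
    have hpos : 0 < 1 / π := by positivity
    unfold surfTen
    rw [← hθ₁, ← hθ₂, ← hθ₃]
    exact mul_neg_of_pos_of_neg hpos hkey
  · intro ρ₁ ρ₂ h1 h2 h3 hcase
    unfold surfTen
    rcases hcase with h | h | h
    · subst h
      have he1 : π * (0:ℝ) = 0 := by ring
      have he2 : π * (1 - 0 - ρ₂) = π - π * ρ₂ := by ring
      rw [he1, he2, lob_zero]
      have hrefl : Lob (π - π * ρ₂) + Lob (π * ρ₂) = 0 :=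
        lob_reflect' (by positivity) (by nlinarith)
      rw [zero_add]
      rw [show Lob (π * ρ₂) + Lob (π - π * ρ₂)
        = Lob (π - π * ρ₂) + Lob (π * ρ₂) from by ring, hrefl, mul_zero]
    · subst h
      have he1 : π * (0:ℝ) = 0 := by ring
      have he2 : π * (1 - ρ₁ - 0) = π - π * ρ₁ := by ring
      rw [he1, he2, lob_zero]
      have hrefl : Lob (π - π * ρ₁) + Lob (π * ρ₁) = 0 :=
        lob_reflect' (by positivity) (by nlinarith)
      rw [show Lob (π * ρ₁) + 0 + Lob (π - π * ρ₁)
        = Lob (π - π * ρ₁) + Lob (π * ρ₁) from by ring, hrefl, mul_zero]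
    · have he1 : π * (1 - ρ₁ - ρ₂) = 0 := by rw [show 1 - ρ₁ - ρ₂ = 0 from by linarith]; ring
      have he2 : π * ρ₂ = π - π * ρ₁ := by nlinarith
      rw [he1, he2, lob_zero]
      have hrefl : Lob (π - π * ρ₁) + Lob (π * ρ₁) = 0 :=
        lob_reflect' (by positivity) (by nlinarith)
      rw [show Lob (π * ρ₁) + Lob (π - π * ρ₁) + 0
        = Lob (π - π * ρ₁) + Lob (π * ρ₁) from by ring, hrefl, mul_zero]
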